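/- Let i : [0,∞) → [0,∞) be continuous, strictly increasing with i(0)=0, and suppose there exist δ₀ ∈ (0,1) and δ₁ > 0 with ∫₀ᵗ i(s)ds ≤ δ₀·i(t)·t + δ₁·i(t) for all t > 0. Then i(t) → +∞ as t → +∞. -/

import Mathlib

open Real Filter

theorem AR_implies_tendsto_atTop (i : ℝ → ℝ) (hi_cont : Continuous i)
    (hi_nonneg : ∀ t, 0 ≤ i t) (hi_zero : ∀ t ≤ 0, i t = 0)
    (hi_mono : StrictMonoOn i (Set.Ici (0 : ℝ)))
    (δ₀ δ₁ : ℝ) (hδ₀ : δ₀ ∈ Set.Ioo (0 : ℝ) 1) (hδ₁ : 0 < δ₁)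
    (hAR : ∀ t, 0 < t → (∫ s in (0 : ℝ)..t, i s) ≤ δ₀ * i t * t + δ₁ * i t) :
    Tendsto i atTop atTop := by
  obtain ⟨hδ₀0, hδ₀1⟩ := hδ₀
  -- i is monotone on ℝ
  have hmono : Monotone i := by
    intro x y hxy
    by_cases hx : x ≤ 0
    · rw [hi_zero x hx]; exact hi_nonneg y
    · push_neg at hx
      exact hi_mono.monotoneOn (Set.mem_Ici.mpr hx.le)
        (Set.mem_Ici.mpr (hx.le.trans hxy)) hxy
  have hi1 : 0 < i 1 := by
    have := hi_mono (Set.mem_Ici.mpr le_rfl) (Set.mem_Ici.mpr zero_le_one) zero_lt_one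
    rwa [hi_zero 0 le_rfl] at this
  -- lower bound on integral
  have hlow : ∀ s t : ℝ, 0 ≤ s → s ≤ t → (t - s) * i s ≤ ∫ x in (0:ℝ)..t, i x := by
    intro s t hs hst
    have hint : ∀ a b : ℝ, IntervalIntegrable i MeasureTheory.volume a b :=
      fun a b => hi_cont.intervalIntegrable a b
    have h1 : (0:ℝ) ≤ ∫ x in (0:ℝ)..s, i x :=
      intervalIntegral.integral_nonneg hs (fun x _ => hi_nonneg x)
    have h2 : (t - s) * i s ≤ ∫ x in s..t, i x := by
      have := intervalIntegral.integral_mono_on hst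
        (intervalIntegrable_const) (hint s t)
        (fun x hx => hmono hx.1)
      simpa [intervalIntegral.integral_const, smul_eq_mul] using this
    have hsplit : (∫ x in (0:ℝ)..s, i x) + (∫ x in s..t, i x) = ∫ x in (0:ℝ)..t, i x :=
      intervalIntegral.integral_add_adjacent_intervals (hint 0 s) (hint s t)
    linarith
  -- growth constant
  set c : ℝ := (δ₀ + 1) / (2 * δ₀) with hc
  have hcδ : c * δ₀ = (δ₀ + 1) / 2 := by field_simp [hc]; rw [hc]; field_simp
  have hc1 : 1 < c := by
    rw [hc, lt_div_iff₀ (by linarith)]; linarith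
  have hcδ1 : c * δ₀ < 1 := by rw [hcδ]; linarith
  -- key step: from s ≥ 1 produce t ≥ s with i t ≥ c * i s
  have key : ∀ s : ℝ, 1 ≤ s → ∃ t : ℝ, s ≤ t ∧ c * i s ≤ i t := by
    intro s hs
    set t : ℝ := (s + c * δ₁) / (1 - c * δ₀) with ht
    have hc0 : 0 < c := by linarith
    have hden : 0 < 1 - c * δ₀ := by linarith
    have hts : t - s = c * (δ₀ * t + δ₁) := by
      field_simp [ht]; rw [ht]; field_simp; ring
    have htpos : 0 < t := by
      apply div_pos _ hden
      positivity
    have hst : s ≤ t := by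
      nlinarith [hi_nonneg s, mul_pos hc0 (add_pos (mul_pos hδ₀0 htpos) hδ₁)]
    have h1 : (t - s) * i s ≤ δ₀ * i t * t + δ₁ * i t :=
      le_trans (hlow s t (by linarith) hst) (hAR t htpos)
    have hq : 0 < δ₀ * t + δ₁ := by positivity
    have : c * (δ₀ * t + δ₁) * i s ≤ (δ₀ * t + δ₁) * i t := by
      rw [← hts]; nlinarith
    exact ⟨t, hst, by nlinarith⟩
  -- iterate: for each n there is a point with value ≥ c^n * i 1
  have iter : ∀ n : ℕ, ∃ s : ℝ, 1 ≤ s ∧ c ^ n * i 1 ≤ i s := by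
    intro n
    induction n with
    | zero => exact ⟨1, le_rfl, by simp⟩
    | succ n ih =>
      obtain ⟨s, hs1, hsn⟩ := ih
      obtain ⟨t, hst, hct⟩ := key s hs1
      refine ⟨t, hs1.trans hst, ?_⟩
      have : c ^ (n + 1) * i 1 ≤ c * i s := by
        rw [pow_succ]
        nlinarith [pow_pos (by linarith : (0:ℝ) < c) n]
      linarith
  apply tendsto_atTop_atTop_of_monotone hmono
  intro b
  have hc' : Tendsto (fun n : ℕ => c ^ n * i 1) atTop atTop :=
    (tendsto_pow_atTop_atTop_of_one_lt hc1).atTop_mul_const hi1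
  obtain ⟨n, hn⟩ := (hc'.eventually_ge_atTop b).exists
  obtain ⟨s, _, hsn⟩ := iter n
  exact ⟨s, hn.trans hsn⟩
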